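/- For irrational x ∈ (0,1), Σ_{k=1}^{∞} ⌊kx⌋/2^k = Σ_{p=1}^{∞} 2^{-⌊p/x⌋}; and for rational x = r/q ∈ (0,1) with r, q coprime, Σ_{k=1}^{∞} ⌊kx⌋/2^k = Σ_{p=1}^{∞} 2^{-⌊p/x⌋} + 1/(2^q - 1). -/

import Mathlib

open scoped ENNReal

lemma dsc_core (x : ℝ) (hx0 : 0 < x) :
    ∑' k : ℕ, ((⌊(k:ℝ)*x⌋.toNat : ℝ≥0∞) * 2⁻¹^k) =
      ∑' p : ℕ, (2⁻¹:ℝ≥0∞) ^ (⌈((p:ℝ)+1)/x⌉.toNat) * 2 := by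
  have key : ∀ k p : ℕ, (((p:ℝ)+1) ≤ (k:ℝ)*x) ↔ p < ⌊(k:ℝ)*x⌋.toNat := by
    intro k p
    rw [Int.lt_toNat, Int.lt_iff_add_one_le, Int.le_floor]
    push_cast; rfl
  have key2 : ∀ k p : ℕ, (((p:ℝ)+1) ≤ (k:ℝ)*x) ↔ ⌈((p:ℝ)+1)/x⌉.toNat ≤ k := by
    intro k p
    rw [Int.toNat_le, Int.ceil_le, div_le_iff₀ hx0]
    push_cast; rfl
  calc ∑' k : ℕ, ((⌊(k:ℝ)*x⌋.toNat : ℝ≥0∞) * 2⁻¹^k)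
      = ∑' (k : ℕ) (p : ℕ), (if ((p:ℝ)+1) ≤ (k:ℝ)*x then (2⁻¹:ℝ≥0∞)^k else 0) := by
        refine tsum_congr fun k => ?_
        rw [tsum_eq_sum (s := Finset.range ⌊(k:ℝ)*x⌋.toNat)
          (fun p hp => by rw [if_neg]; rw [key]; simpa using hp)]
        rw [Finset.sum_ite_of_true (fun p hp => (key k p).mpr (Finset.mem_range.mp hp))]
        simp [Finset.sum_const, mul_comm]
    _ = ∑' (p : ℕ) (k : ℕ), (if ((p:ℝ)+1) ≤ (k:ℝ)*x then (2⁻¹:ℝ≥0∞)^k else 0) :=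
        ENNReal.tsum_comm
    _ = ∑' p : ℕ, (2⁻¹:ℝ≥0∞) ^ (⌈((p:ℝ)+1)/x⌉.toNat) * 2 := by
        refine tsum_congr fun p => ?_
        set c := ⌈((p:ℝ)+1)/x⌉.toNat with hc
        have hinj : Function.Injective (fun j : ℕ => j + c) := fun a b h => by simpa using h
        rw [← Function.Injective.tsum_eq hinj (f := fun k : ℕ =>
            (if ((p:ℝ)+1) ≤ (k:ℝ)*x then (2⁻¹:ℝ≥0∞)^k else 0)) ?_]
        · have : ∀ j : ℕ, (if ((p:ℝ)+1) ≤ ((j+c:ℕ):ℝ)*x then (2⁻¹:ℝ≥0∞)^(j+c) else 0)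
              = 2⁻¹^c * 2⁻¹^j := by
            intro j
            rw [if_pos ((key2 (j+c) p).mpr (by omega)), pow_add, mul_comm]
          rw [tsum_congr this, ENNReal.tsum_mul_left, ENNReal.tsum_geometric,
            ENNReal.one_sub_inv_two, inv_inv]
        · intro k hk
          rw [Function.mem_support] at hk
          have hck : c ≤ k := by
            by_contra h
            exact hk (if_neg fun hcond => h ((key2 k p).mp hcond))
          exact ⟨k - c, by simp; omega⟩

lemma dsc_lhs (x : ℝ) (hx0 : 0 < x) :
    ∑' k : ℕ, (⌊(k:ℝ)*x⌋ : ℝ) / 2^k =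
      (∑' k : ℕ, ((⌊(k:ℝ)*x⌋.toNat : ℝ≥0∞) * 2⁻¹^k)).toReal := by
  rw [ENNReal.tsum_toReal_eq (fun k => ENNReal.mul_ne_top (ENNReal.natCast_ne_top _)
    (ENNReal.pow_ne_top (by simp)))]
  refine tsum_congr fun k => ?_
  have h0 : (0:ℤ) ≤ ⌊(k:ℝ)*x⌋ := Int.floor_nonneg.mpr (by positivity)
  have hcast : ((⌊(k:ℝ)*x⌋ : ℤ):ℝ) = (⌊(k:ℝ)*x⌋.toNat : ℝ) := by
    exact_mod_cast congrArg (fun z : ℤ => (z:ℝ)) (Int.toNat_of_nonneg h0).symm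
  rw [ENNReal.toReal_mul, ENNReal.toReal_pow, ENNReal.toReal_inv, ENNReal.toReal_ofNat,
    ENNReal.toReal_natCast, hcast, div_eq_mul_inv, ← inv_pow]

lemma dsc_ceil {y : ℝ} (h : ∀ m : ℤ, y ≠ (m:ℝ)) : ⌈y⌉ = ⌊y⌋ + 1 := by
  have h1 : (⌊y⌋:ℝ) < y := lt_of_le_of_ne (Int.floor_le y) fun he => h ⌊y⌋ he.symm
  have h2 := Int.ceil_le_floor_add_one y
  have h3 : ⌊y⌋ < ⌈y⌉ := Int.lt_ceil.mpr h1
  omega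

lemma dsc_term_toReal (n : ℕ) : ((2⁻¹:ℝ≥0∞)^n).toReal = ((2:ℝ)^n)⁻¹ := by
  rw [ENNReal.toReal_pow, ENNReal.toReal_inv, ← inv_pow, ENNReal.toReal_ofNat]

theorem devilStaircase_alt_formula :
    (∀ x : ℝ, x ∈ Set.Ioo (0 : ℝ) 1 → Irrational x →
      ∑' k : ℕ, (⌊(k : ℝ) * x⌋ : ℝ) / 2 ^ k =
        ∑' p : ℕ, (2 : ℝ) ^ (-⌊((p : ℝ) + 1) / x⌋)) ∧
    (∀ r q : ℕ, 0 < r → 0 < q → Nat.Coprime r q → (r : ℝ) / q ∈ Set.Ioo (0 : ℝ) 1 →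
      ∑' k : ℕ, (⌊(k : ℝ) * ((r : ℝ) / q)⌋ : ℝ) / 2 ^ k =
        (∑' p : ℕ, (2 : ℝ) ^ (-⌊((p : ℝ) + 1) / ((r : ℝ) / q)⌋)) + 1 / (2 ^ q - 1)) := by
  constructor
  · -- irrational case
    intro x hx hirr
    obtain ⟨hx0, hx1⟩ := hx
    rw [dsc_lhs x hx0, dsc_core x hx0]
    rw [ENNReal.tsum_toReal_eq
      (fun p => ENNReal.mul_ne_top (ENNReal.pow_ne_top (by simp)) (by simp))]
    refine (tsum_congr fun p => ?_).symm
    set y : ℝ := ((p:ℝ)+1)/x with hy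
    have hy0 : 0 < y := by positivity
    have hni : ∀ m : ℤ, y ≠ (m:ℝ) := by
      intro m hm
      have hxne : x ≠ 0 := ne_of_gt hx0
      have hp1 : ((p:ℝ)+1) = m * x := by
        rw [hy, div_eq_iff hxne] at hm; linarith
      have hm0 : (m:ℝ) ≠ 0 := by
        intro h0; rw [h0, zero_mul] at hp1
        have : (0:ℝ) < (p:ℝ)+1 := by positivity
        linarith
      exact hirr ⟨((p:ℚ)+1)/(m:ℚ), by push_cast; rw [div_eq_iff hm0, hp1]; ring⟩
    have hceil : ⌈y⌉ = ⌊y⌋ + 1 := dsc_ceil hni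
    have hfl0 : 0 ≤ ⌊y⌋ := Int.floor_nonneg.mpr (le_of_lt hy0)
    have htn : (⌈y⌉).toNat = ⌊y⌋.toNat + 1 := by omega
    rw [htn, ENNReal.toReal_mul, dsc_term_toReal, ENNReal.toReal_ofNat,
      show ⌊y⌋ = (⌊y⌋.toNat:ℤ) from (Int.toNat_of_nonneg hfl0).symm, zpow_neg, zpow_natCast,
      pow_succ, mul_inv, mul_assoc, inv_mul_cancel₀ (two_ne_zero), mul_one]
    norm_num
    omega
  · -- rational case
    intro r q hr hq hcop hx
    obtain ⟨hx0, hx1⟩ := hx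
    set x : ℝ := (r:ℝ)/q with hxdef
    have hq0 : (q:ℝ) ≠ 0 := Nat.cast_ne_zero.mpr hq.ne'
    have hr0 : (r:ℝ) ≠ 0 := Nat.cast_ne_zero.mpr hr.ne'
    set u : ℕ → ℝ≥0∞ := fun p => (2⁻¹:ℝ≥0∞)^(⌊((p:ℝ)+1)/x⌋.toNat) with hu
    set v : ℕ → ℝ≥0∞ := fun p => if r ∣ (p+1) then (2⁻¹:ℝ≥0∞)^(((p+1)/r)*q) else 0 with hv
    have hyge : ∀ p : ℕ, ((p:ℝ)+1) ≤ ((p:ℝ)+1)/x := by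
      intro p
      rw [le_div_iff₀ hx0]
      nlinarith [Nat.cast_nonneg (α := ℝ) p]
    have hflge : ∀ p : ℕ, (p+1 : ℤ) ≤ ⌊((p:ℝ)+1)/x⌋ := by
      intro p
      rw [Int.le_floor]; push_cast; exact hyge p
    -- termwise splitting
    have hsplit : ∀ p : ℕ, (2⁻¹:ℝ≥0∞) ^ (⌈((p:ℝ)+1)/x⌉.toNat) * 2 = u p + v p := by
      intro p
      by_cases hd : r ∣ (p+1)
      · have hd' := hd
        obtain ⟨m, hm⟩ := hd'
        have hm1 : 1 ≤ m := Nat.one_le_iff_ne_zero.mpr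
          (fun h => by rw [h, mul_zero] at hm; omega)
        have hyeq : ((p:ℝ)+1)/x = ((m*q : ℕ):ℝ) := by
          have h1 : ((p:ℝ)+1) = (r:ℝ)*(m:ℝ) := by
            rw [show ((p:ℝ)+1) = ((p+1 : ℕ):ℝ) by push_cast; ring, hm]; push_cast; ring
          rw [h1, hxdef]; push_cast; field_simp
        have hdiv : (p+1)/r = m := by rw [hm]; exact Nat.mul_div_cancel_left m hr
        simp only [hu, hv]
        rw [if_pos hd, hdiv, hyeq, Int.ceil_natCast, Int.floor_natCast, Int.toNat_natCast,
          mul_comm _ (2:ℝ≥0∞), two_mul]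
      · have hni : ∀ z : ℤ, ((p:ℝ)+1)/x ≠ (z:ℝ) := by
          intro z hz
          have hzq : ((p:ℝ)+1)*(q:ℝ) = (z:ℝ)*(r:ℝ) := by
            rw [hxdef] at hz; field_simp at hz; linarith
          have hzZ : ((p:ℤ)+1)*(q:ℤ) = z*(r:ℤ) := by exact_mod_cast hzq
          have h1 : (r:ℤ) ∣ ((p+1)*q : ℕ) := by
            push_cast; exact ⟨z, by linarith [hzZ]⟩
          have h2 : r ∣ (p+1)*q := Int.natCast_dvd_natCast.mp h1
          exact hd (Nat.Coprime.dvd_of_dvd_mul_right hcop h2)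
        have hceil : ⌈((p:ℝ)+1)/x⌉ = ⌊((p:ℝ)+1)/x⌋ + 1 := dsc_ceil hni
        have hf1 := hflge p
        have htn : (⌈((p:ℝ)+1)/x⌉).toNat = ⌊((p:ℝ)+1)/x⌋.toNat + 1 := by omega
        simp only [hu, hv]
        rw [if_neg hd, add_zero, htn, pow_succ, mul_assoc,
          ENNReal.inv_mul_cancel (by norm_num) (by norm_num), mul_one]
    -- sum of v
    have hvsum : ∑' p, v p = ∑' m : ℕ, (2⁻¹:ℝ≥0∞)^((m+1)*q) := by
      have hinj : Function.Injective (fun m : ℕ => (m+1)*r - 1) := by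
        intro a b h
        simp only at h
        have ha : 1 ≤ (a+1)*r := Nat.one_le_iff_ne_zero.mpr (by positivity)
        have hb : 1 ≤ (b+1)*r := Nat.one_le_iff_ne_zero.mpr (by positivity)
        have h' : (a+1)*r = (b+1)*r := by omega
        have := Nat.eq_of_mul_eq_mul_right hr h'
        omega
      rw [← Function.Injective.tsum_eq hinj (f := v) ?_]
      · refine tsum_congr fun m => ?_
        have h1 : 1 ≤ (m+1)*r := Nat.one_le_iff_ne_zero.mpr (by positivity)
        have he : ((m+1)*r - 1) + 1 = (m+1)*r := by omega
        simp only [hv, he]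
        rw [if_pos ⟨m+1, mul_comm (m+1) r⟩, Nat.mul_div_cancel _ hr]
      · intro p hp
        rw [Function.mem_support, hv] at hp
        have hd : r ∣ (p+1) := by
          by_contra h
          exact hp (if_neg h)
        obtain ⟨m, hm⟩ := hd
        have hm1 : 1 ≤ m := Nat.one_le_iff_ne_zero.mpr
          (fun h => by rw [h, mul_zero] at hm; omega)
        refine ⟨m-1, ?_⟩
        show (m-1+1)*r - 1 = p
        have h2 : (m-1+1) = m := by omega
        rw [h2, mul_comm]
        omega
    -- finiteness
    have hU : ∑' p, u p ≠ ⊤ := by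
      have hb : ∀ p : ℕ, u p ≤ (2⁻¹:ℝ≥0∞)^p := by
        intro p
        refine pow_le_pow_right_of_le_one' (by simp [ENNReal.inv_le_one]) ?_
        have := hflge p; omega
      refine ne_top_of_le_ne_top ?_ (ENNReal.tsum_le_tsum hb)
      rw [ENNReal.tsum_geometric, ENNReal.one_sub_inv_two, inv_inv]
      exact ENNReal.ofNat_ne_top
    have hV : ∑' p, v p ≠ ⊤ := by
      rw [hvsum]
      have hb : ∀ m : ℕ, (2⁻¹:ℝ≥0∞)^((m+1)*q) ≤ (2⁻¹:ℝ≥0∞)^m := by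
        intro m
        refine pow_le_pow_right_of_le_one' (by simp [ENNReal.inv_le_one]) ?_
        nlinarith
      refine ne_top_of_le_ne_top ?_ (ENNReal.tsum_le_tsum hb)
      rw [ENNReal.tsum_geometric, ENNReal.one_sub_inv_two, inv_inv]
      exact ENNReal.ofNat_ne_top
    -- main computation
    rw [dsc_lhs x hx0, dsc_core x hx0, tsum_congr hsplit, ENNReal.tsum_add,
      ENNReal.toReal_add hU hV]
    congr 1
    · rw [ENNReal.tsum_toReal_eq (fun p => ENNReal.pow_ne_top (by simp))]
      refine tsum_congr fun p => ?_
      have hf1 := hflge p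
      rw [dsc_term_toReal,
        show ⌊((p:ℝ)+1)/x⌋ = (⌊((p:ℝ)+1)/x⌋.toNat : ℤ) from (Int.toNat_of_nonneg (by omega)).symm,
        zpow_neg, zpow_natCast]
      norm_num
      omega
    · rw [hvsum, ENNReal.tsum_toReal_eq (fun m => ENNReal.pow_ne_top (by simp))]
      have hterm : ∀ m : ℕ, ((2⁻¹:ℝ≥0∞)^((m+1)*q)).toReal = ((2⁻¹:ℝ)^q)^(m+1) := by
        intro m
        rw [dsc_term_toReal, ← inv_pow, mul_comm (m+1) q, pow_mul]
      rw [tsum_congr hterm]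
      have hc0 : (0:ℝ) ≤ (2⁻¹:ℝ)^q := by positivity
      have hc1 : (2⁻¹:ℝ)^q < 1 := pow_lt_one₀ (by norm_num) (by norm_num) (by omega)
      have hg : ∑' m : ℕ, ((2⁻¹:ℝ)^q)^(m+1) = (2⁻¹:ℝ)^q * (1 - (2⁻¹:ℝ)^q)⁻¹ := by
        simp_rw [pow_succ, mul_comm _ ((2⁻¹:ℝ)^q)]
        rw [tsum_mul_left, tsum_geometric_of_lt_one hc0 hc1]
      rw [hg]
      have h2q : (1:ℝ) < 2^q := one_lt_pow₀ (by norm_num) (by omega)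
      have h2qi : (2⁻¹:ℝ)^q = ((2:ℝ)^q)⁻¹ := by rw [inv_pow]
      have hne : (1:ℝ) - (2⁻¹:ℝ)^q ≠ 0 := by
        rw [h2qi]
        have : ((2:ℝ)^q)⁻¹ < 1 := by rw [inv_lt_one₀ (by linarith)]; exact h2q
        linarith
      have hne2 : (2:ℝ)^q - 1 ≠ 0 := by linarith
      rw [h2qi]
      field_simp
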